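/- For a prime p, an even integer k, a complex number s, and any nonzero integer b, define f_{p,b}(s) := [p^{-(s-1)-k/2}((Σ_{i=1}^{v} (p-1) p^{i-1+i(2s+k-2)}) - p^{v+(v+1)(2s+k-2)}) + 1] / [ζ_p^{-1}(-2s-k+2) ζ_p(-2s-k+1; v)], where v = v_p(b) and ζ_p(s; v) := Σ_{n=0}^{v} p^{-ns}. Then the ratio ψ_{p,b}(s) := f_{p,b}(1-k-s) / f_{p,b}(s) is independent of b; explicitly ψ_{p,b}(s) = (1 + p^{s+k/2-1}) / (1 + p^{-s-k/2}). -/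
import Mathlib


open Complex

/-- The local factor `f_{p,b}(s)` (depending on `v = v_p(b)`):
`f_{p,b}(s) = [p^{-(s-1)-k/2}((Σ_{i=1}^{v}(p-1)p^{i-1+i(2s+k-2)}) - p^{v+(v+1)(2s+k-2)}) + 1]
  / [ζ_p^{-1}(-2s-k+2) · ζ_p(-2s-k+1; v)]`,
where `ζ_p^{-1}(x) = 1 - p^{-x}` and `ζ_p(x; v) = Σ_{n=0}^{v} p^{-nx}`. -/
noncomputable def fLocal (p : ℕ) (k : ℤ) (v : ℕ) (z : ℂ) : ℂ :=
  ((p : ℂ) ^ (-(z - 1) - (k : ℂ) / 2) *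
      ((∑ i ∈ Finset.Icc 1 v,
          ((p : ℂ) - 1) * (p : ℂ) ^ ((i : ℂ) - 1 + (i : ℂ) * (2 * z + (k : ℂ) - 2))) -
        (p : ℂ) ^ ((v : ℂ) + ((v : ℂ) + 1) * (2 * z + (k : ℂ) - 2))) + 1) /
    ((1 - (p : ℂ) ^ (2 * z + (k : ℂ) - 2)) *
      (∑ n ∈ Finset.range (v + 1), (p : ℂ) ^ ((n : ℂ) * (2 * z + (k : ℂ) - 1))))


open Finset


-- reversal: T^v * S_w = S_u
lemma auxR (q u w : ℂ) (h1 : q * u * w = 1) (v : ℕ) :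
    (q*u^2)^v * ∑ n ∈ range (v+1), (q*w^2)^n = ∑ n ∈ range (v+1), (q*u^2)^n := by
  rw [Finset.mul_sum]
  have h : ∀ n ∈ range (v+1), (q*u^2)^v * (q*w^2)^n = (q*u^2)^(v - n) := by
    intro n hn
    have hn' : n ≤ v := Nat.lt_succ_iff.mp (Finset.mem_range.mp hn)
    have : (q*u^2)^v = (q*u^2)^(v-n) * (q*u^2)^n := by rw [← pow_add, Nat.sub_add_cancel hn']
    rw [this, mul_assoc, ← mul_pow]
    have h2 : q*u^2*(q*w^2) = 1 := by
      have : q*u^2*(q*w^2) = (q*u*w)^2 := by ring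
      rw [this, h1, one_pow]
    rw [h2, one_pow, mul_one]
  rw [Finset.sum_congr rfl h]
  have := Finset.sum_range_reflect (fun n => (q*u^2)^n) (v+1)
  simpa using this

-- E : (w - u) * S_u = w - u * T^v
lemma auxE (q u w : ℂ) (hq : q ≠ 0) (hu : u ≠ 0) (h1 : q * u * w = 1) (v : ℕ) :
    (w - u) * ∑ n ∈ range (v+1), (q*u^2)^n = w - u * (q*u^2)^v := by
  have geom := mul_geom_sum (q*u^2) (v+1)
  apply mul_left_cancel₀ (mul_ne_zero hq hu)
  linear_combination ((∑ n ∈ range (v+1), (q*u^2)^n) - 1) * h1 - geom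

-- K : (u - w) * S_u * S_w = u * S_u - w * S_w
lemma auxK (q u w : ℂ) (hq : q ≠ 0) (hu : u ≠ 0) (h1 : q * u * w = 1) (v : ℕ) :
    (u - w) * (∑ n ∈ range (v+1), (q*u^2)^n) * (∑ n ∈ range (v+1), (q*w^2)^n)
      = u * (∑ n ∈ range (v+1), (q*u^2)^n) - w * (∑ n ∈ range (v+1), (q*w^2)^n) := by
  have hR := auxR q u w h1 v
  have hE := auxE q u w hq hu h1 v
  linear_combination (-(∑ n ∈ range (v+1), (q*w^2)^n)) * hE + u * hR

lemma auxNum (q x : ℂ) (hq : q ≠ 0) (hx : x ≠ 0) (v : ℕ) :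
    x * (x⁻¹ * ((∑ i ∈ Finset.Icc 1 v, (q - 1) * (q⁻¹ * (q*x^2)^i)) - (q*x^2)^v * x^2) + 1)
      = (1 - x) * ((1 + x) * (∑ n ∈ range (v+1), (q*x^2)^n) - 1) := by
  have hIcc : ∑ i ∈ Finset.Icc 1 v, (q - 1) * (q⁻¹ * (q*x^2)^i)
      = ∑ i ∈ range v, (q - 1) * (q⁻¹ * (q*x^2)^(1+i)) := by
    rw [← Finset.Ico_add_one_right_eq_Icc, Finset.sum_Ico_eq_sum_range]
    simp
  have hA : ∑ i ∈ Finset.Icc 1 v, (q - 1) * (q⁻¹ * (q*x^2)^i)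
      = (q-1) * q⁻¹ * (q*x^2) * ∑ i ∈ range v, (q*x^2)^i := by
    rw [hIcc, Finset.mul_sum]
    exact Finset.sum_congr rfl fun i _ => by ring
  have hS1 : ∑ n ∈ range (v+1), (q*x^2)^n = (q*x^2) * (∑ n ∈ range v, (q*x^2)^n) + 1 :=
    geom_sum_succ
  have hS2 : ∑ n ∈ range (v+1), (q*x^2)^n = (q*x^2)^v + ∑ n ∈ range v, (q*x^2)^n :=
    geom_sum_succ'
  have hq' : q * q⁻¹ = 1 := mul_inv_cancel₀ hq
  have hx' : x * x⁻¹ = 1 := mul_inv_cancel₀ hx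
  rw [hA, mul_add, mul_one, ← mul_assoc, mul_inv_cancel₀ hx, one_mul]
  linear_combination ((q-1)*x^2*(∑ i ∈ range v, (q*x^2)^i)) * hq' - hS1 + x^2 * hS2

lemma auxCore (q u w : ℂ) (hq : q ≠ 0) (hu : u ≠ 0) (hw : w ≠ 0) (h1 : q * u * w = 1)
    (v : ℕ)
    (hDu : (1 - u^2) * (∑ n ∈ range (v+1), (q*u^2)^n) ≠ 0)
    (hDw : (1 - w^2) * (∑ n ∈ range (v+1), (q*w^2)^n) ≠ 0)
    (hFu : (u⁻¹ * ((∑ i ∈ Finset.Icc 1 v, (q - 1) * (q⁻¹ * (q*u^2)^i)) - (q*u^2)^v * u^2) + 1)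
      / ((1 - u^2) * (∑ n ∈ range (v+1), (q*u^2)^n)) ≠ 0)
    (hd : 1 + w ≠ 0) :
    ((w⁻¹ * ((∑ i ∈ Finset.Icc 1 v, (q - 1) * (q⁻¹ * (q*w^2)^i)) - (q*w^2)^v * w^2) + 1)
      / ((1 - w^2) * (∑ n ∈ range (v+1), (q*w^2)^n)))
    / ((u⁻¹ * ((∑ i ∈ Finset.Icc 1 v, (q - 1) * (q⁻¹ * (q*u^2)^i)) - (q*u^2)^v * u^2) + 1)
      / ((1 - u^2) * (∑ n ∈ range (v+1), (q*u^2)^n)))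
    = (1 + u) / (1 + w) := by
  set Su := ∑ n ∈ range (v+1), (q*u^2)^n with hSu
  set Sw := ∑ n ∈ range (v+1), (q*w^2)^n with hSw
  set Nu := u⁻¹ * ((∑ i ∈ Finset.Icc 1 v, (q - 1) * (q⁻¹ * (q*u^2)^i)) - (q*u^2)^v * u^2) + 1
    with hNu
  set Nw := w⁻¹ * ((∑ i ∈ Finset.Icc 1 v, (q - 1) * (q⁻¹ * (q*w^2)^i)) - (q*w^2)^v * w^2) + 1
    with hNw
  rw [div_eq_div_iff hFu hd]
  rw [div_mul_eq_mul_div, mul_div_assoc', div_eq_div_iff hDw hDu]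
  have hMu := auxNum q u hq hu v
  have hMw := auxNum q w hq hw v
  rw [← hNu] at hMu
  rw [← hNw] at hMw
  have hK := auxK q u w hq hu h1 v
  rw [← hSu] at hMu hK
  rw [← hSw] at hMw hK
  apply mul_left_cancel₀ (mul_ne_zero hu hw)
  linear_combination (u*(1+w)*((1-u^2)*Su)) * hMw - (w*(1+u)*((1-w^2)*Sw)) * hMu
    + (1-u^2)*(1-w^2) * hK

section cpowConv
variable (p : ℕ) (k : ℤ) (v : ℕ) (z : ℂ)

lemma cpow_den_eq (hp0 : ((p : ℕ) : ℂ) ≠ 0) :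
    (1 - (p : ℂ) ^ (2 * z + (k : ℂ) - 2)) *
      (∑ n ∈ Finset.range (v + 1), (p : ℂ) ^ ((n : ℂ) * (2 * z + (k : ℂ) - 1)))
    = (1 - ((p : ℂ) ^ (z + (k : ℂ)/2 - 1))^2) *
      (∑ n ∈ Finset.range (v + 1), ((p : ℂ) * ((p : ℂ) ^ (z + (k : ℂ)/2 - 1))^2)^n) := by
  have hT : (p : ℂ) ^ (2 * z + (k : ℂ) - 1)
      = (p : ℂ) * ((p : ℂ) ^ (z + (k : ℂ)/2 - 1))^2 := by
    rw [show 2 * z + (k : ℂ) - 1 = 1 + ((2 : ℕ) : ℂ) * (z + (k : ℂ)/2 - 1) by push_cast; ring,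
      cpow_add _ _ hp0, cpow_one, cpow_nat_mul]
  have hx2 : (p : ℂ) ^ (2 * z + (k : ℂ) - 2) = ((p : ℂ) ^ (z + (k : ℂ)/2 - 1))^2 := by
    rw [show 2 * z + (k : ℂ) - 2 = ((2 : ℕ) : ℂ) * (z + (k : ℂ)/2 - 1) by push_cast; ring,
      cpow_nat_mul]
  rw [hx2]
  congr 1
  refine Finset.sum_congr rfl fun n _ => ?_
  rw [← hT, ← cpow_nat_mul]

lemma fLocal_eq (hp0 : ((p : ℕ) : ℂ) ≠ 0) :
    fLocal p k v z =
      (((p : ℂ) ^ (z + (k : ℂ)/2 - 1))⁻¹ *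
          ((∑ i ∈ Finset.Icc 1 v,
            ((p : ℂ) - 1) * ((p : ℂ)⁻¹ * ((p : ℂ) * ((p : ℂ) ^ (z + (k : ℂ)/2 - 1))^2)^i)) -
            ((p : ℂ) * ((p : ℂ) ^ (z + (k : ℂ)/2 - 1))^2)^v * ((p : ℂ) ^ (z + (k : ℂ)/2 - 1))^2)
        + 1) /
      ((1 - ((p : ℂ) ^ (z + (k : ℂ)/2 - 1))^2) *
        (∑ n ∈ Finset.range (v + 1), ((p : ℂ) * ((p : ℂ) ^ (z + (k : ℂ)/2 - 1))^2)^n)) := by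
  have hT : (p : ℂ) ^ (2 * z + (k : ℂ) - 1)
      = (p : ℂ) * ((p : ℂ) ^ (z + (k : ℂ)/2 - 1))^2 := by
    rw [show 2 * z + (k : ℂ) - 1 = 1 + ((2 : ℕ) : ℂ) * (z + (k : ℂ)/2 - 1) by push_cast; ring,
      cpow_add _ _ hp0, cpow_one, cpow_nat_mul]
  have hx2 : (p : ℂ) ^ (2 * z + (k : ℂ) - 2) = ((p : ℂ) ^ (z + (k : ℂ)/2 - 1))^2 := by
    rw [show 2 * z + (k : ℂ) - 2 = ((2 : ℕ) : ℂ) * (z + (k : ℂ)/2 - 1) by push_cast; ring,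
      cpow_nat_mul]
  have e1 : (p : ℂ) ^ (-(z - 1) - (k : ℂ)/2) = ((p : ℂ) ^ (z + (k : ℂ)/2 - 1))⁻¹ := by
    rw [show -(z - 1) - (k : ℂ)/2 = -(z + (k : ℂ)/2 - 1) by ring, cpow_neg]
  have ev : (p : ℂ) ^ ((v : ℂ) + ((v : ℂ) + 1) * (2 * z + (k : ℂ) - 2))
      = ((p : ℂ) * ((p : ℂ) ^ (z + (k : ℂ)/2 - 1))^2)^v * ((p : ℂ) ^ (z + (k : ℂ)/2 - 1))^2 := by
    rw [show (v : ℂ) + ((v : ℂ) + 1) * (2 * z + (k : ℂ) - 2)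
        = ((v : ℕ) : ℂ) * (2 * z + (k : ℂ) - 1) + (2 * z + (k : ℂ) - 2) by push_cast; ring,
      cpow_add _ _ hp0, cpow_nat_mul, hT, hx2]
  have hsum1 : ∀ i : ℕ, (p : ℂ) ^ ((i : ℂ) - 1 + (i : ℂ) * (2 * z + (k : ℂ) - 2))
      = (p : ℂ)⁻¹ * ((p : ℂ) * ((p : ℂ) ^ (z + (k : ℂ)/2 - 1))^2)^i := by
    intro i
    rw [show (i : ℂ) - 1 + (i : ℂ) * (2 * z + (k : ℂ) - 2)
        = (-1 : ℂ) + ((i : ℕ) : ℂ) * (2 * z + (k : ℂ) - 1) by push_cast; ring,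
      cpow_add _ _ hp0, cpow_nat_mul, hT, cpow_neg, cpow_one]
  have hsumA : ∑ i ∈ Finset.Icc 1 v, ((p : ℂ) - 1) * (p : ℂ) ^ ((i : ℂ) - 1 + (i : ℂ) * (2 * z + (k : ℂ) - 2))
      = ∑ i ∈ Finset.Icc 1 v,
          ((p : ℂ) - 1) * ((p : ℂ)⁻¹ * ((p : ℂ) * ((p : ℂ) ^ (z + (k : ℂ)/2 - 1))^2)^i) :=
    Finset.sum_congr rfl fun i _ => by rw [hsum1 i]
  rw [fLocal, e1, ev, cpow_den_eq p k v z hp0, hsumA]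
end cpowConv


/-- The ratio `ψ_{p,b}(s) = f_{p,b}(1-k-s)/f_{p,b}(s)` is independent of `b`;
explicitly it equals `(1 + p^{s+k/2-1})/(1 + p^{-s-k/2})`. -/
theorem fLocal_ratio_eq
    (p : ℕ) (hp : p.Prime) (k : ℤ) (hk : Even k)
    (b : ℤ) (hb : b ≠ 0) (v : ℕ) (hv : v = padicValInt p b) (s : ℂ)
    (hden₁ : (1 - (p : ℂ) ^ (2 * s + (k : ℂ) - 2)) *
      (∑ n ∈ Finset.range (v + 1), (p : ℂ) ^ ((n : ℂ) * (2 * s + (k : ℂ) - 1))) ≠ 0)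
    (hden₂ : (1 - (p : ℂ) ^ (2 * (1 - (k : ℂ) - s) + (k : ℂ) - 2)) *
      (∑ n ∈ Finset.range (v + 1),
        (p : ℂ) ^ ((n : ℂ) * (2 * (1 - (k : ℂ) - s) + (k : ℂ) - 1))) ≠ 0)
    (hf : fLocal p k v s ≠ 0)
    (hd : 1 + (p : ℂ) ^ (-s - (k : ℂ) / 2) ≠ 0) :
    fLocal p k v (1 - (k : ℂ) - s) / fLocal p k v s =
      (1 + (p : ℂ) ^ (s + (k : ℂ) / 2 - 1)) / (1 + (p : ℂ) ^ (-s - (k : ℂ) / 2)) := by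
  have hp0 : ((p : ℕ) : ℂ) ≠ 0 := Nat.cast_ne_zero.mpr hp.ne_zero
  have hz : (1 - (k : ℂ) - s) + (k : ℂ)/2 - 1 = -s - (k : ℂ)/2 := by ring
  have h1 : (p : ℂ) * (p : ℂ) ^ (s + (k : ℂ)/2 - 1) * (p : ℂ) ^ (-s - (k : ℂ)/2) = 1 := by
    rw [mul_assoc, ← cpow_add _ _ hp0,
      show (s + (k : ℂ)/2 - 1) + (-s - (k : ℂ)/2) = -1 by ring, cpow_neg, cpow_one,
      mul_inv_cancel₀ hp0]
  have hu : (p : ℂ) ^ (s + (k : ℂ)/2 - 1) ≠ 0 := by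
    intro h; rw [h] at h1; simp at h1
  have hw : (p : ℂ) ^ (-s - (k : ℂ)/2) ≠ 0 := by
    intro h; rw [h] at h1; simp at h1
  rw [cpow_den_eq p k v s hp0] at hden₁
  rw [cpow_den_eq p k v (1 - (k : ℂ) - s) hp0, hz] at hden₂
  rw [fLocal_eq p k v s hp0] at hf
  rw [fLocal_eq p k v s hp0, fLocal_eq p k v (1 - (k : ℂ) - s) hp0, hz]
  exact auxCore (p : ℂ) _ _ hp0 hu hw h1 v hden₁ hden₂ hf hd
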